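/- Let v, w ∈ ℝ³ satisfy ‖v‖ = ‖w‖ = 1 and ⟨v,w⟩ = 0, let B be a skew-symmetric real 3×3 matrix with B·v = 0 and B·w ≠ 0, and let A = [[B, w],[wᵀ, 0]] be the associated real 4×4 block matrix, assumed to satisfy A³ = 0. Let v̄ = (v₁, v₂, v₃, 0) and e₄ = (0,0,0,1), and define f : ℝ² → ℝ⁴ by f(t,s) = exp(tA) · (sinh(s)·v̄ + cosh(s)·e₄). Then f is a proper map: the preimage under f of every compact subset of ℝ⁴ is compact. In particular the image f(ℝ²) is a closed subset of ℝ⁴. -/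

import Mathlib

open Matrix RealInnerProductSpace

noncomputable section

/-- The Lorentz inner product `⟨x,y⟩_L = x₁y₁ + x₂y₂ + x₃y₃ − x₄y₄` on `ℝ⁴`. -/
def lorentz (x y : Fin 4 → ℝ) : ℝ :=
  x 0 * y 0 + x 1 * y 1 + x 2 * y 2 - x 3 * y 3

/-- The Lorentz signature matrix `J = diag(1,1,1,−1)`. -/
def lorentzJ : Matrix (Fin 4) (Fin 4) ℝ :=
  Matrix.diagonal ![1, 1, 1, -1]

/-- The block matrix `A = [[B, w], [wᵀ, 0]]`: upper-left `3×3` block `B`, last column the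
entries of `w` in the first three rows and `0` in the last, last row the entries of `w`
in the first three columns and `0` in the last. -/
def blockA (B : Matrix (Fin 3) (Fin 3) ℝ) (w : Fin 3 → ℝ) : Matrix (Fin 4) (Fin 4) ℝ :=
  fun i j =>
    if hi : (i : ℕ) < 3 then
      if hj : (j : ℕ) < 3 then B ⟨i, hi⟩ ⟨j, hj⟩ else w ⟨i, hi⟩
    else
      if hj : (j : ℕ) < 3 then w ⟨j, hj⟩ else 0

/-- The inclusion of `ℝ³` into `ℝ⁴` as the vectors with vanishing fourth coordinate. -/
def extend3 (v : Fin 3 → ℝ) : Fin 4 → ℝ :=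
  fun i => if h : (i : ℕ) < 3 then v ⟨i, h⟩ else 0

/-- The fourth canonical basis vector `e₄ = (0,0,0,1)` of `ℝ⁴`. -/
def e4 : Fin 4 → ℝ := fun i => if i = 3 then 1 else 0
lemma exp_nil (M : Matrix (Fin 4) (Fin 4) ℝ) (h : M ^ 3 = 0) :
    NormedSpace.exp M = 1 + M + (2⁻¹ : ℝ) • M ^ 2 := by
  rw [NormedSpace.exp_eq_tsum (𝕂 := ℝ)]
  have hz : ∀ n ∉ Finset.range 3, ((n.factorial : ℝ))⁻¹ • M ^ n = 0 := by
    intro n hn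
    have h3 : 3 ≤ n := by simpa using hn
    have : M ^ n = 0 := by
      calc M ^ n = M ^ 3 * M ^ (n - 3) := by rw [← pow_add]; congr 1; omega
      _ = 0 := by rw [h, zero_mul]
    simp [this]
  beta_reduce
  rw [tsum_eq_sum hz]
  simp [Finset.sum_range_succ, Nat.factorial]

lemma mulVec_extend3 (B : Matrix (Fin 3) (Fin 3) ℝ) (w : Fin 3 → ℝ) (x : Fin 3 → ℝ) :
    (blockA B w).mulVec (extend3 x) = extend3 (B.mulVec x) + (w ⬝ᵥ x) • e4 := by
  funext i
  fin_cases i <;>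
    simp [blockA, extend3, e4, Matrix.mulVec, dotProduct,
      Fin.sum_univ_four, Fin.sum_univ_three, show ¬((3:Fin 4):ℕ) < 3 from by decide,
      show ((0:Fin 4):ℕ) < 3 from by decide, show ((1:Fin 4):ℕ) < 3 from by decide,
      show ((2:Fin 4):ℕ) < 3 from by decide]

lemma mulVec_e4 (B : Matrix (Fin 3) (Fin 3) ℝ) (w : Fin 3 → ℝ) :
    (blockA B w).mulVec e4 = extend3 w := by
  funext i
  fin_cases i <;>
    simp [blockA, extend3, e4, Matrix.mulVec, dotProduct, Fin.sum_univ_four,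
      show ¬((3:Fin 4):ℕ) < 3 from by decide, show ((0:Fin 4):ℕ) < 3 from by decide,
      show ((1:Fin 4):ℕ) < 3 from by decide, show ((2:Fin 4):ℕ) < 3 from by decide]


lemma extend3_zero : extend3 0 = 0 := by
  funext i; simp [extend3]

lemma abs_le_max_one_sq (t : ℝ) : |t| ≤ max 1 (t ^ 2) := by
  rcases le_total |t| 1 with h | h
  · exact le_trans h (le_max_left _ _)
  · refine le_trans ?_ (le_max_right _ _)
    have : |t| * 1 ≤ |t| * |t| := by nlinarith [abs_nonneg t]
    calc |t| = |t| * 1 := by ring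
    _ ≤ |t| * |t| := this
    _ = t ^ 2 := by rw [← abs_mul, ← sq, abs_sq]

lemma abs_le_two_cosh (s : ℝ) : |s| ≤ 2 * Real.cosh s := by
  have h1 : |s| + 1 ≤ Real.exp |s| := Real.add_one_le_exp _
  have h2 : Real.exp |s| ≤ Real.exp s + Real.exp (-s) := by
    rcases abs_cases s with ⟨h, _⟩ | ⟨h, _⟩
    · rw [h]; nlinarith [Real.exp_pos (-s)]
    · rw [h]; nlinarith [Real.exp_pos s]
  rw [Real.cosh_eq]
  nlinarith


/-- The map `f(t,s) = exp(tA)·(sinh(s)·v̄ + cosh(s)·e₄)` of the hyperbolic counterexample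
is a proper map: preimages of compact sets are compact. In particular its image is a
closed subset of `ℝ⁴`. -/
theorem f_proper
    (v w : EuclideanSpace ℝ (Fin 3)) (hv : ‖v‖ = 1) (hw : ‖w‖ = 1) (hvw : ⟪v, w⟫ = 0)
    (B : Matrix (Fin 3) (Fin 3) ℝ) (hB : Bᵀ = -B) (hBv : B.mulVec v = 0)
    (hBw : B.mulVec w ≠ 0) (hA : blockA B w ^ 3 = 0)
    (f : ℝ × ℝ → (Fin 4 → ℝ))
    (hf : ∀ p : ℝ × ℝ, f p = (NormedSpace.exp (p.1 • blockA B w)).mulVec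
      (Real.sinh p.2 • extend3 v + Real.cosh p.2 • e4)) :
    (∀ K : Set (Fin 4 → ℝ), IsCompact K → IsCompact (f ⁻¹' K)) ∧
    IsClosed (Set.range f) := by
  have hwv : (w : Fin 3 → ℝ) ⬝ᵥ (v : Fin 3 → ℝ) = 0 := by
    have h := hvw
    simp only [PiLp.inner_apply, RCLike.inner_apply, starRingEnd_apply, star_trivial] at h
    simpa [dotProduct, mul_comm] using h
  have hww : (w : Fin 3 → ℝ) ⬝ᵥ (w : Fin 3 → ℝ) = 1 := by
    have h1 : ⟪w, w⟫ = 1 := by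
      rw [real_inner_self_eq_norm_sq, hw]; norm_num
    simp only [PiLp.inner_apply, RCLike.inner_apply, starRingEnd_apply, star_trivial] at h1
    simpa [dotProduct] using h1
  have key : ∀ p : ℝ × ℝ, f p =
      Real.sinh p.2 • extend3 v + Real.cosh p.2 • e4
      + (p.1 * Real.cosh p.2) • extend3 w
      + (2⁻¹ * p.1 ^ 2 * Real.cosh p.2) • (extend3 (B.mulVec w) + e4) := by
    intro p
    have hnil : (p.1 • blockA B w) ^ 3 = 0 := by
      rw [smul_pow, hA, smul_zero]
    have hAu : (blockA B w).mulVec (Real.sinh p.2 • extend3 v + Real.cosh p.2 • e4)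
        = Real.cosh p.2 • extend3 w := by
      rw [Matrix.mulVec_add, Matrix.mulVec_smul, Matrix.mulVec_smul, mulVec_extend3,
        mulVec_e4, hBv, hwv, extend3_zero]
      simp
    have hA2u : ((blockA B w) ^ 2).mulVec (Real.sinh p.2 • extend3 v + Real.cosh p.2 • e4)
        = Real.cosh p.2 • (extend3 (B.mulVec w) + e4) := by
      rw [pow_two, ← Matrix.mulVec_mulVec, hAu, Matrix.mulVec_smul, mulVec_extend3, hww]
      simp
    rw [hf, exp_nil _ hnil, Matrix.add_mulVec, Matrix.add_mulVec, Matrix.one_mulVec,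
      Matrix.smul_mulVec, hAu, smul_pow, Matrix.smul_mulVec, Matrix.smul_mulVec, hA2u]
    simp only [smul_smul]
    module
  have h3 : ∀ p : ℝ × ℝ, f p 3 = Real.cosh p.2 * (1 + 2⁻¹ * p.1 ^ 2) := by
    intro p
    rw [key]
    simp [extend3, e4, show ¬((3:Fin 4):ℕ) < 3 from by decide]
    ring
  have hfc : Continuous f := by
    rw [funext key]
    fun_prop
  have hcomp : ∀ K : Set (Fin 4 → ℝ), IsCompact K → IsCompact (f ⁻¹' K) := by
    intro K hK
    obtain ⟨R, hR⟩ := hK.isBounded.subset_closedBall 0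
    set C : ℝ := max R 1 with hC
    have hC1 : (1:ℝ) ≤ C := le_max_right _ _
    have hKC : K ⊆ Metric.closedBall 0 C :=
      hR.trans (Metric.closedBall_subset_closedBall (le_max_left _ _))
    apply Metric.isCompact_of_isClosed_isBounded
    · exact hK.isClosed.preimage hfc
    · apply Metric.isBounded_closedBall (x := (0 : ℝ × ℝ)) (r := max 1 (2 * C)) |>.subset
      intro p hp
      have hfp : ‖f p‖ ≤ C := by
        have := hKC hp
        rwa [Metric.mem_closedBall, dist_zero_right] at this
      have h4 : |f p 3| ≤ C := le_trans (norm_le_pi_norm (f p) 3) hfp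
      rw [h3] at h4
      have hcosh : 1 ≤ Real.cosh p.2 := Real.one_le_cosh p.2
      have hpos : (0:ℝ) ≤ 1 + 2⁻¹ * p.1 ^ 2 := by positivity
      have habs : Real.cosh p.2 * (1 + 2⁻¹ * p.1 ^ 2) ≤ C := by
        rwa [abs_of_nonneg (by positivity)] at h4
      have ht2 : p.1 ^ 2 ≤ 2 * C := by nlinarith
      have hcoshC : Real.cosh p.2 ≤ C := by nlinarith
      have ht : |p.1| ≤ max 1 (2 * C) := by
        refine (abs_le_max_one_sq p.1).trans ?_
        exact max_le_max le_rfl ht2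
      have hs : |p.2| ≤ max 1 (2 * C) := by
        refine le_trans (abs_le_two_cosh p.2) ?_
        refine le_trans ?_ (le_max_right _ _)
        nlinarith
      rw [Metric.mem_closedBall, dist_zero_right, Prod.norm_def]
      exact max_le (by simpa using ht) (by simpa using hs)
  refine ⟨hcomp, ?_⟩
  have hproper : IsProperMap f :=
    isProperMap_iff_isCompact_preimage.mpr ⟨hfc, fun K hK => hcomp K hK⟩
  exact hproper.isClosedMap.isClosed_range
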